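/- arXiv:2605.22261 — 3 statements merged into one kernel-verified Lean document; each statement's English description precedes it below -/
import Mathlib

section
/- (Security of the general DSA scheme.) Let F be a finite field with q elements, let T+1 < U ≤ K−1 with K ≥ 3, and let α ∈ F^{U×K} be a (T+1)-private MDS matrix. On a probability space Ω let W₁,…,W_K, N₁,…,N_K, S₁,…,S_K be mutually independent random variables with each W_k and N_k uniform on F^{U−T−1} and each S_k uniform on F^{T+1}. Define the shares [Q_i]_k = (N_i, S_i) · α_k, the keys Z_k = (N_k, ([Q_i]_k)_{i∈{1,…,K}}), the first-round messages X_k = W_k + N_k, and, for 𝒰₁ ⊆ {1,…,K} with |𝒰₁| ≥ U, the second-round messages Y_k^{𝒰₁} = ∑_{i∈𝒰₁} [Q_i]_k. Then for every u ∈ {1,…,K}, every 𝒯 ⊆ {1,…,K} with |𝒯| ≤ T, and every 𝒰₁ ⊆ {1,…,K} with |𝒰₁| ≥ U, the random tuple ((X_k)_{k∈{1,…,K}\{u}}, (Y_k^{𝒰₁})_{k∈𝒰₁\{u}}) is conditionally independent of the input tuple (W₁,…,W_K) given the σ-algebra generated by (∑_{k∈𝒰₁} W_k, (W_k, Z_k)_{k∈𝒯∪{u}}).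 -/
open MeasureTheory Finset
open scoped ENNReal

/-- Two (discrete) random tuples `f` and `g` are statistically independent:
the joint law of `(f, g)` is the product of the marginal laws, expressed pointwise. -/
def IndepRV {Ω A B : Type*} [MeasurableSpace Ω] (P : Measure Ω)
    (f : Ω → A) (g : Ω → B) : Prop :=
  ∀ (a : A) (b : B), P (f ⁻¹' {a} ∩ g ⁻¹' {b}) = P (f ⁻¹' {a}) * P (g ⁻¹' {b})

/-- A finite family of (discrete) random variables is mutually independent:
the joint law factorizes as the product of the marginals, expressed pointwise. -/
def iIndepRV {Ω ι : Type*} [Fintype ι] {A : ι → Type*} [MeasurableSpace Ω]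
    (P : Measure Ω) (f : ∀ i, Ω → A i) : Prop :=
  ∀ a : ∀ i, A i, P (⋂ i, f i ⁻¹' {a i}) = ∏ i, P (f i ⁻¹' {a i})

/-- Conditional independence of two (discrete) random tuples `f` and `g` given the
σ-algebra generated by a third (discrete) random tuple `h`, expressed pointwise:
`P(f = a, g = b | h = c) = P(f = a | h = c) * P(g = b | h = c)` for every `a`, `b`, `c`,
in a multiplied-out form that avoids division by zero. -/
def CondIndepRV {Ω A B C : Type*} [MeasurableSpace Ω] (P : Measure Ω)
    (f : Ω → A) (g : Ω → B) (h : Ω → C) : Prop :=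
  ∀ (a : A) (b : B) (c : C),
    P (f ⁻¹' {a} ∩ g ⁻¹' {b} ∩ h ⁻¹' {c}) * P (h ⁻¹' {c}) =
      P (f ⁻¹' {a} ∩ h ⁻¹' {c}) * P (g ⁻¹' {b} ∩ h ⁻¹' {c})

/-- A random variable valued in a finite type is uniformly distributed. -/
def UniformRV {Ω A : Type*} [Fintype A] [MeasurableSpace Ω] (P : Measure Ω)
    (f : Ω → A) : Prop :=
  ∀ a : A, P (f ⁻¹' {a}) = (Fintype.card A : ℝ≥0∞)⁻¹

/-- `α ∈ F^{U×K}` is an MDS matrix: every `U×U` submatrix formed by `U` distinct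
columns is invertible. -/
def IsMDS {F : Type*} [Field F] {U K : ℕ} (α : Matrix (Fin U) (Fin K) F) : Prop :=
  ∀ c : Fin U → Fin K, Function.Injective c →
    (Matrix.of fun i j : Fin U => α i (c j)).det ≠ 0

/-- `α ∈ F^{U×K}` is a `(T+1)`-private MDS matrix: it is MDS, and in addition every
`(T+1)×(T+1)` submatrix formed by `T+1` distinct columns of its last `T+1` rows is
invertible. -/
def IsPrivateMDS {F : Type*} [Field F] {U K : ℕ} (T : ℕ) (hTU : T + 1 ≤ U)
    (α : Matrix (Fin U) (Fin K) F) : Prop :=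
  IsMDS α ∧
    ∀ c : Fin (T + 1) → Fin K, Function.Injective c →
      (Matrix.of fun i j : Fin (T + 1) =>
        α ⟨U - (T + 1) + i.1, by have := i.isLt; omega⟩ (c j)).det ≠ 0

/-- The scalar share `[Q_i]_k`: the inner product of the concatenated row vector
`(N_i, S_i) ∈ F^U` with the `k`-th column of `α`. -/
def share {F : Type*} [Field F] {U K T : ℕ} (h : U - T - 1 + (T + 1) = U)
    (α : Matrix (Fin U) (Fin K) F)
    (n : Fin (U - T - 1) → F) (s : Fin (T + 1) → F) (k : Fin K) : F :=
  ∑ j : Fin U, Fin.append n s (Fin.cast h.symm j) * α j k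

/-! ### Auxiliary lemmas -/

lemma measure_preimage_eq_card
    {Ω V : Type*} [MeasurableSpace Ω] [Fintype V] (P : Measure Ω) [IsProbabilityMeasure P]
    (Vm : Ω → V) (hsing : ∀ v : V, P (Vm ⁻¹' {v}) = (Fintype.card V : ℝ≥0∞)⁻¹)
    (E : Finset V) :
    P (Vm ⁻¹' ↑E) = (E.card : ℝ≥0∞) * (Fintype.card V : ℝ≥0∞)⁻¹ := by
  classical
  set ι : ℝ≥0∞ := (Fintype.card V : ℝ≥0∞)⁻¹ with hι
  have hupper : ∀ E : Finset V, P (Vm ⁻¹' ↑E) ≤ (E.card : ℝ≥0∞) * ι := by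
    intro E
    have : Vm ⁻¹' ↑E = ⋃ v ∈ E, Vm ⁻¹' {v} := by
      ext ω; simp
    rw [this]
    calc P (⋃ v ∈ E, Vm ⁻¹' {v}) ≤ ∑ v ∈ E, P (Vm ⁻¹' {v}) := measure_biUnion_finset_le _ _
      _ = (E.card : ℝ≥0∞) * ι := by simp [hsing, mul_comm]
  have hVpos : (0 : ℕ) < Fintype.card V := by
    by_contra h
    have hcard : Fintype.card V = 0 := by omega
    have : (1 : ℝ≥0∞) = 0 := by
      have := hupper Finset.univ
      have huniv : (Vm ⁻¹' ↑(Finset.univ : Finset V)) = Set.univ := by simp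
      rw [huniv] at this
      simpa [hcard, measure_univ] using this
    simp at this
  have hsumuniv : ((Finset.univ : Finset V).card : ℝ≥0∞) * ι = 1 := by
    rw [Finset.card_univ, hι]
    exact ENNReal.mul_inv_cancel (by exact_mod_cast hVpos.ne') (by simp)
  have hιtop : ∀ E : Finset V, (E.card : ℝ≥0∞) * ι ≠ ⊤ := by
    intro E
    exact ENNReal.mul_ne_top (by simp)
      (by rw [hι]; exact ENNReal.inv_ne_top.mpr (by exact_mod_cast hVpos.ne'))
  refine le_antisymm (hupper E) ?_
  have hsplit : (1 : ℝ≥0∞) ≤ P (Vm ⁻¹' ↑E) + P (Vm ⁻¹' ↑Eᶜ) := by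
    have : (Set.univ : Set Ω) = Vm ⁻¹' ↑E ∪ Vm ⁻¹' ↑Eᶜ := by
      ext ω; by_cases h : Vm ω ∈ E <;> simp [h]
    calc (1 : ℝ≥0∞) = P Set.univ := (measure_univ).symm
      _ = P (Vm ⁻¹' ↑E ∪ Vm ⁻¹' ↑Eᶜ) := by rw [← this]
      _ ≤ _ := measure_union_le _ _
  have hcards : (E.card : ℝ≥0∞) * ι + (Eᶜ.card : ℝ≥0∞) * ι = 1 := by
    rw [← add_mul, ← Nat.cast_add]
    rw [Finset.card_add_card_compl]
    exact hsumuniv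
  have := calc (E.card : ℝ≥0∞) * ι + (Eᶜ.card : ℝ≥0∞) * ι = 1 := hcards
    _ ≤ P (Vm ⁻¹' ↑E) + P (Vm ⁻¹' ↑Eᶜ) := hsplit
    _ ≤ P (Vm ⁻¹' ↑E) + (Eᶜ.card : ℝ≥0∞) * ι := by gcongr; exact hupper _
  exact (ENNReal.add_le_add_iff_right (hιtop Eᶜ)).mp this

lemma counting_core {V B : Type*} [Fintype V] [Fintype B] [DecidableEq V] [DecidableEq B]
    (Γ : V → B) (PA PC : V → Prop) [DecidablePred PA] [DecidablePred PC]
    (Cons : B → Prop) [DecidablePred Cons]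
    (hcons : ∀ v, PC v → Cons (Γ v))
    (hmove : ∀ b b', Cons b → Cons b' → ∃ e : V → V, Function.Injective e ∧
        ∀ v, Γ v = b → PC v → (Γ (e v) = b' ∧ PC (e v) ∧ (PA (e v) ↔ PA v)))
    (b0 : B) :
    (univ.filter fun v => PA v ∧ Γ v = b0 ∧ PC v).card * (univ.filter PC).card
      = (univ.filter fun v => PA v ∧ PC v).card
          * (univ.filter fun v => Γ v = b0 ∧ PC v).card := by
  classical
  set Nab : B → ℕ := fun b => (univ.filter fun v => PA v ∧ Γ v = b ∧ PC v).card with hNab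
  set Nb : B → ℕ := fun b => (univ.filter fun v => Γ v = b ∧ PC v).card with hNb
  have hle : ∀ b b', Cons b → Cons b' → Nab b ≤ Nab b' ∧ Nb b ≤ Nb b' := by
    intro b b' hb hb'
    obtain ⟨e, einj, hmaps⟩ := hmove b b' hb hb'
    constructor
    · apply Finset.card_le_card_of_injOn e
      · intro v hv
        simp only [Finset.mem_coe, mem_filter, mem_univ, true_and] at hv ⊢
        obtain ⟨h1, h2, h3⟩ := hv
        obtain ⟨g1, g2, g3⟩ := hmaps v h2 h3
        exact ⟨g3.mpr h1, g1, g2⟩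
      · exact einj.injOn
    · apply Finset.card_le_card_of_injOn e
      · intro v hv
        simp only [Finset.mem_coe, mem_filter, mem_univ, true_and] at hv ⊢
        obtain ⟨h2, h3⟩ := hv
        obtain ⟨g1, g2, _⟩ := hmaps v h2 h3
        exact ⟨g1, g2⟩
      · exact einj.injOn
  have heqab : ∀ b b', Cons b → Cons b' → Nab b = Nab b' :=
    fun b b' hb hb' => le_antisymm (hle b b' hb hb').1 (hle b' b hb' hb).1
  have heqb : ∀ b b', Cons b → Cons b' → Nb b = Nb b' :=
    fun b b' hb hb' => le_antisymm (hle b b' hb hb').2 (hle b' b hb' hb).2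
  have hzb : ∀ b, ¬ Cons b → Nb b = 0 := by
    intro b hb
    rw [hNb]
    simp only [Finset.card_eq_zero, Finset.filter_eq_empty_iff]
    intro v _ hv
    exact hb (hv.1 ▸ hcons v hv.2)
  have hzab : ∀ b, ¬ Cons b → Nab b = 0 := by
    intro b hb
    rw [hNab]
    simp only [Finset.card_eq_zero, Finset.filter_eq_empty_iff]
    intro v _ hv
    exact hb (hv.2.1 ▸ hcons v hv.2.2)
  have hPC : (univ.filter PC).card = ∑ b, Nb b := by
    rw [Finset.card_eq_sum_card_fiberwise (f := Γ) (t := univ) (fun x _ => mem_univ _)]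
    refine Finset.sum_congr rfl fun b _ => ?_
    congr 1
    ext v
    simp only [mem_filter, mem_univ, true_and]
    tauto
  have hPAC : (univ.filter fun v => PA v ∧ PC v).card = ∑ b, Nab b := by
    rw [Finset.card_eq_sum_card_fiberwise (f := Γ) (t := univ) (fun x _ => mem_univ _)]
    refine Finset.sum_congr rfl fun b _ => ?_
    congr 1
    ext v
    simp only [mem_filter, mem_univ, true_and]
    tauto
  show Nab b0 * (univ.filter PC).card = (univ.filter fun v => PA v ∧ PC v).card * Nb b0
  rw [hPC, hPAC]
  by_cases hb0 : Cons b0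
  · have h1 : ∑ b, Nb b = (univ.filter Cons).card * Nb b0 := by
      rw [← Finset.sum_filter_add_sum_filter_not univ Cons]
      rw [Finset.sum_congr rfl (fun b hb => heqb b b0 (by simpa using (mem_filter.mp hb).2) hb0)]
      rw [Finset.sum_congr rfl (fun b hb => hzb b (by simpa using (mem_filter.mp hb).2))]
      simp [Finset.sum_const, mul_comm]
    have h2 : ∑ b, Nab b = (univ.filter Cons).card * Nab b0 := by
      rw [← Finset.sum_filter_add_sum_filter_not univ Cons]
      rw [Finset.sum_congr rfl (fun b hb => heqab b b0 (by simpa using (mem_filter.mp hb).2) hb0)]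
      rw [Finset.sum_congr rfl (fun b hb => hzab b (by simpa using (mem_filter.mp hb).2))]
      simp [Finset.sum_const, mul_comm]
    rw [h1, h2]; ring
  · rw [hzab b0 hb0, hzb b0 hb0]; ring

lemma share_split {F : Type*} [Field F] {U K T : ℕ} (h : U - T - 1 + (T + 1) = U)
    (α : Matrix (Fin U) (Fin K) F)
    (n : Fin (U - T - 1) → F) (s : Fin (T + 1) → F) (k : Fin K) :
    share h α n s k =
      (∑ i, n i * α (Fin.cast h (Fin.castAdd (T + 1) i)) k)
        + ∑ i, s i * α (Fin.cast h (Fin.natAdd (U - T - 1) i)) k := by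
  unfold share
  rw [show (∑ j : Fin U, Fin.append n s (Fin.cast h.symm j) * α j k)
      = ∑ j : Fin (U - T - 1 + (T + 1)), Fin.append n s j * α (Fin.cast h j) k from
    (Fintype.sum_equiv (finCongr h) _ _ (by intro j; simp)).symm]
  rw [Fin.sum_univ_add]
  simp [Fin.append_left, Fin.append_right]

lemma share_add {F : Type*} [Field F] {U K T : ℕ} (h : U - T - 1 + (T + 1) = U)
    (α : Matrix (Fin U) (Fin K) F)
    (n δ : Fin (U - T - 1) → F) (s ε : Fin (T + 1) → F) (k : Fin K) :
    share h α (n + δ) (s + ε) k = share h α n s k + share h α δ ε k := by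
  simp only [share_split, Pi.add_apply, add_mul, Finset.sum_add_distrib]
  ring

lemma share_eps {F : Type*} [Field F] {U K T : ℕ} (hm : U - T - 1 + (T + 1) = U)
    (α : Matrix (Fin U) (Fin K) F) (A : Matrix (Fin (U - T - 1)) (Fin (T + 1)) F)
    (d : Fin (U - T - 1) → F) (k : Fin K) :
    share hm α d (fun l => -∑ r, d r * A r l) k
      = ∑ r, d r * (α (Fin.cast hm (Fin.castAdd (T + 1) r)) k
          - ∑ l, A r l * α (Fin.cast hm (Fin.natAdd (U - T - 1) l)) k) := by
  rw [share_split]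
  simp only [neg_mul, Finset.sum_neg_distrib, Finset.sum_mul, mul_sub, Finset.mul_sum,
    Finset.sum_sub_distrib, mul_assoc]
  rw [Finset.sum_comm]
  ring

lemma share_eps_zero {F : Type*} [Field F] {U K T : ℕ} (hm : U - T - 1 + (T + 1) = U)
    (α : Matrix (Fin U) (Fin K) F) (A : Matrix (Fin (U - T - 1)) (Fin (T + 1)) F)
    (k : Fin K)
    (hk : ∀ r, α (Fin.cast hm (Fin.castAdd (T + 1) r)) k
        = ∑ l, A r l * α (Fin.cast hm (Fin.natAdd (U - T - 1) l)) k)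
    (d : Fin (U - T - 1) → F) :
    share hm α d (fun l => -∑ r, d r * A r l) k = 0 := by
  rw [share_eps]
  apply Finset.sum_eq_zero
  intro r _
  rw [hk r, sub_self, mul_zero]

lemma share_eps_sum {F : Type*} [Field F] {U K T : ℕ} (hm : U - T - 1 + (T + 1) = U)
    (α : Matrix (Fin U) (Fin K) F) (A : Matrix (Fin (U - T - 1)) (Fin (T + 1)) F)
    (k : Fin K) (U1 : Finset (Fin K)) (δ : Fin K → Fin (U - T - 1) → F)
    (hδ : ∑ i ∈ U1, δ i = 0) :
    ∑ i ∈ U1, share hm α (δ i) (fun l => -∑ r, δ i r * A r l) k = 0 := by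
  simp only [share_eps]
  rw [Finset.sum_comm]
  apply Finset.sum_eq_zero
  intro r _
  rw [← Finset.sum_mul]
  have : ∑ i ∈ U1, δ i r = 0 := by
    have := congrFun hδ r
    simpa [Finset.sum_apply] using this
  rw [this, zero_mul]

lemma exists_interp {F : Type*} [Field F] {m t K : ℕ}
    (top : Matrix (Fin m) (Fin K) F) (bot : Matrix (Fin t) (Fin K) F)
    (T' : Finset (Fin K)) (hT' : T'.card = t)
    (hdet : ∀ c : Fin t → Fin K, Function.Injective c → (∀ j, c j ∈ T') →
       (Matrix.of fun i j => bot i (c j)).det ≠ 0) :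
    ∃ A : Matrix (Fin m) (Fin t) F, ∀ k ∈ T', ∀ i, top i k = ∑ l, A i l * bot l k := by
  classical
  set e := T'.orderIsoOfFin hT' with he
  set c : Fin t → Fin K := fun j => (e j : Fin K) with hc
  have hcinj : Function.Injective c := fun x y hxy => by
    have : (e x : {x // x ∈ T'}) = e y := Subtype.ext hxy
    exact e.injective this
  have hcmem : ∀ j, c j ∈ T' := fun j => (e j).2
  set B : Matrix (Fin t) (Fin t) F := Matrix.of fun i j => bot i (c j) with hB
  have hBdet : IsUnit B.det := isUnit_iff_ne_zero.mpr (hdet c hcinj hcmem)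
  set A : Matrix (Fin m) (Fin t) F := (Matrix.of fun i j => top i (c j)) * B⁻¹ with hA
  have hAB : A * B = Matrix.of fun i j => top i (c j) := by
    rw [hA, Matrix.mul_assoc, Matrix.nonsing_inv_mul B hBdet, Matrix.mul_one]
  refine ⟨A, fun k hk i => ?_⟩
  set j := e.symm ⟨k, hk⟩ with hj
  have hck : c j = k := by rw [hc]; simp [hj]
  have h2 := congrFun (congrFun hAB i) j
  rw [Matrix.mul_apply] at h2
  have h3 : Matrix.of (fun i j => top i (c j)) i j = top i k := by
    simp only [Matrix.of_apply, hck]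
  rw [h3] at h2
  rw [← h2]
  refine Finset.sum_congr rfl fun l _ => ?_
  have h4 : B l j = bot l k := by
    show Matrix.of (fun i j => bot i (c j)) l j = bot l k
    simp only [Matrix.of_apply, hck]
  rw [h4]

/-- **Security of the general DSA scheme.**
With mutually independent uniform `W_k, N_k` (on `F^{U-T-1}`) and `S_k` (on `F^{T+1}`),
shares `[Q_i]_k = (N_i, S_i) · α_k` for a `(T+1)`-private MDS matrix `α`, keys
`Z_k = (N_k, ([Q_i]_k)_{i ∈ [K]})`, first-round messages `X_k = W_k + N_k` and
second-round messages `Y_k^{𝒰₁} = ∑_{i ∈ 𝒰₁} [Q_i]_k`, the tuple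
`((X_k)_{k ≠ u}, (Y_k^{𝒰₁})_{k ∈ 𝒰₁ \ {u}})` is conditionally independent of
`(W₁, …, W_K)` given `(∑_{k ∈ 𝒰₁} W_k, (W_k, Z_k)_{k ∈ 𝒯 ∪ {u}})`, for every user `u`,
every `𝒯` with `|𝒯| ≤ T` and every `𝒰₁` with `|𝒰₁| ≥ U`. -/
theorem dsa_scheme_security
    (F : Type) [Field F] [Fintype F] (q K U T : ℕ)
    (hq : Fintype.card F = q) (hK : 3 ≤ K) (hTU : T + 1 < U) (hUK : U ≤ K - 1)
    (Ω : Type) [MeasurableSpace Ω] (P : Measure Ω) [IsProbabilityMeasure P]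
    (W N : Fin K → Ω → (Fin (U - T - 1) → F))
    (S : Fin K → Ω → (Fin (T + 1) → F))
    (hindep : ∀ (a b : Fin K → (Fin (U - T - 1) → F))
        (c : Fin K → (Fin (T + 1) → F)),
      P ((⋂ i, W i ⁻¹' {a i}) ∩ (⋂ i, N i ⁻¹' {b i}) ∩ ⋂ i, S i ⁻¹' {c i}) =
        (∏ i, P (W i ⁻¹' {a i})) * (∏ i, P (N i ⁻¹' {b i})) *
          ∏ i, P (S i ⁻¹' {c i}))
    (hunifW : ∀ i, UniformRV P (W i))
    (hunifN : ∀ i, UniformRV P (N i))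
    (hunifS : ∀ i, UniformRV P (S i))
    (α : Matrix (Fin U) (Fin K) F)
    (hα : IsPrivateMDS T (by omega) α)
    (u : Fin K) (𝒯 : Finset (Fin K)) (h𝒯 : 𝒯.card ≤ T)
    (U1 : Finset (Fin K)) (hU1 : U ≤ U1.card) :
    CondIndepRV P
      (fun ω =>
        ((fun k : {k : Fin K // k ≠ u} => W k.1 ω + N k.1 ω),
         (fun k : {k // k ∈ U1.erase u} =>
            ∑ i ∈ U1, share (by omega) α (N i ω) (S i ω) k.1)))
      (fun ω => fun k : Fin K => W k ω)
      (fun ω =>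
        (∑ k ∈ U1, W k ω,
         fun k : {k // k ∈ insert u 𝒯} =>
           (W k.1 ω,
             (N k.1 ω, fun i : Fin K => share (by omega) α (N i ω) (S i ω) k.1)))) := by
  classical
  intro a b c
  have hm : U - T - 1 + (T + 1) = U := by omega
  -- the configuration space
  set Vt := (Fin K → Fin (U - T - 1) → F) × (Fin K → Fin (U - T - 1) → F) ×
      (Fin K → Fin (T + 1) → F) with hVt
  set Vmap : Ω → Vt := fun ω => (fun k => W k ω, fun k => N k ω, fun k => S k ω) with hVmap
  set Φ : Vt → ({k : Fin K // k ≠ u} → Fin (U - T - 1) → F) ×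
      ({k // k ∈ U1.erase u} → F) := fun v =>
    ((fun k => v.1 k.1 + v.2.1 k.1),
     (fun k => ∑ i ∈ U1, share hm α (v.2.1 i) (v.2.2 i) k.1)) with hΦ
  set Hc : Vt → (Fin (U - T - 1) → F) ×
      ({k // k ∈ insert u 𝒯} → (Fin (U - T - 1) → F) ×
        ((Fin (U - T - 1) → F) × (Fin K → F))) := fun v =>
    (∑ k ∈ U1, v.1 k,
     fun k => (v.1 k.1, (v.2.1 k.1, fun i : Fin K => share hm α (v.2.1 i) (v.2.2 i) k.1)))
    with hHc
  -- singleton probabilities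
  have hsing : ∀ v : Vt, P (Vmap ⁻¹' {v}) = (Fintype.card Vt : ℝ≥0∞)⁻¹ := by
    intro v
    have hset : Vmap ⁻¹' {v}
        = (⋂ i, W i ⁻¹' {v.1 i}) ∩ (⋂ i, N i ⁻¹' {v.2.1 i}) ∩ ⋂ i, S i ⁻¹' {v.2.2 i} := by
      ext ω
      constructor
      · intro h
        have h' : Vmap ω = v := h
        rw [← h']
        simp only [hVmap, Set.mem_inter_iff, Set.mem_iInter, Set.mem_preimage,
          Set.mem_singleton_iff]
        exact ⟨⟨fun i => trivial, fun i => trivial⟩, fun i => trivial⟩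
      · intro h
        simp only [Set.mem_inter_iff, Set.mem_iInter, Set.mem_preimage,
          Set.mem_singleton_iff] at h
        obtain ⟨⟨h1, h2⟩, h3⟩ := h
        show Vmap ω = v
        refine Prod.ext ?_ (Prod.ext ?_ ?_)
        · funext i; exact h1 i
        · funext i; exact h2 i
        · funext i; exact h3 i
    rw [hset, hindep]
    have cW : ∀ i, P (W i ⁻¹' {v.1 i}) = (Fintype.card (Fin (U - T - 1) → F) : ℝ≥0∞)⁻¹ :=
      fun i => hunifW i _
    have cN : ∀ i, P (N i ⁻¹' {v.2.1 i}) = (Fintype.card (Fin (U - T - 1) → F) : ℝ≥0∞)⁻¹ :=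
      fun i => hunifN i _
    have cS : ∀ i, P (S i ⁻¹' {v.2.2 i}) = (Fintype.card (Fin (T + 1) → F) : ℝ≥0∞)⁻¹ :=
      fun i => hunifS i _
    simp only [cW, cN, cS, Finset.prod_const, Finset.card_univ, Fintype.card_fin]
    simp only [← ENNReal.inv_pow]
    rw [← ENNReal.mul_inv (Or.inr (ENNReal.pow_ne_top (ENNReal.natCast_ne_top _)))
        (Or.inl (ENNReal.pow_ne_top (ENNReal.natCast_ne_top _))),
      ← ENNReal.mul_inv (Or.inr (ENNReal.pow_ne_top (ENNReal.natCast_ne_top _)))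
        (Or.inl (ENNReal.mul_ne_top (ENNReal.pow_ne_top (ENNReal.natCast_ne_top _))
          (ENNReal.pow_ne_top (ENNReal.natCast_ne_top _))))]
    congr 1
    have hcard : Fintype.card Vt
        = Fintype.card (Fin (U - T - 1) → F) ^ K * Fintype.card (Fin (U - T - 1) → F) ^ K *
          Fintype.card (Fin (T + 1) → F) ^ K := by
      simp only [hVt, Fintype.card_prod, Fintype.card_fun, Fintype.card_fin, mul_assoc]
    rw [hcard]
    push_cast
    ring
  -- probabilities as counting
  have key : ∀ p : Vt → Prop, P (Vmap ⁻¹' {v | p v})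
      = ((univ.filter p).card : ℝ≥0∞) * (Fintype.card Vt : ℝ≥0∞)⁻¹ := by
    intro p
    have hseteq : {v : Vt | p v} = ↑(univ.filter p) := by
      ext v; simp
    rw [hseteq, measure_preimage_eq_card P Vmap hsing]
  -- rewrite the goal in configuration-space form
  show P (Vmap ⁻¹' {v | (Φ v = a ∧ v.1 = b) ∧ Hc v = c}) * P (Vmap ⁻¹' {v | Hc v = c})
      = P (Vmap ⁻¹' {v | Φ v = a ∧ Hc v = c}) * P (Vmap ⁻¹' {v | v.1 = b ∧ Hc v = c})
  rw [key (fun v => (Φ v = a ∧ v.1 = b) ∧ Hc v = c), key (fun v => Hc v = c),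
    key (fun v => Φ v = a ∧ Hc v = c), key (fun v => v.1 = b ∧ Hc v = c)]
  -- the combinatorial heart
  -- choose T' ⊇ insert u 𝒯 of size T+1
  have hDcard : (insert u 𝒯).card ≤ T + 1 :=
    le_trans (Finset.card_insert_le u 𝒯) (by omega)
  obtain ⟨T', hDT', hT'card⟩ := Finset.exists_superset_card_eq hDcard
    (by simpa using (by omega : T + 1 ≤ K))
  have hdet : ∀ cc : Fin (T + 1) → Fin K, Function.Injective cc → (∀ j, cc j ∈ T') →
      (Matrix.of fun i j => α (Fin.cast hm (Fin.natAdd (U - T - 1) i)) (cc j)).det ≠ 0 := by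
    intro cc hinj _
    have h2 := hα.2 cc hinj
    have h3 : (Matrix.of fun i j : Fin (T + 1) =>
          α (Fin.cast hm (Fin.natAdd (U - T - 1) i)) (cc j))
        = (Matrix.of fun i j : Fin (T + 1) =>
          α ⟨U - (T + 1) + i.1, by have := i.isLt; omega⟩ (cc j)) := by
      ext i j
      have h4 : (Fin.cast hm (Fin.natAdd (U - T - 1) i)) =
          (⟨U - (T + 1) + i.1, by have := i.isLt; omega⟩ : Fin U) := by
        apply Fin.ext
        simp only [Fin.coe_cast, Fin.coe_natAdd]
        omega
      simp only [Matrix.of_apply]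
      rw [h4]
    rw [h3]
    exact h2
  obtain ⟨A, hA⟩ := exists_interp (fun i k => α (Fin.cast hm (Fin.castAdd (T + 1) i)) k)
    (fun i k => α (Fin.cast hm (Fin.natAdd (U - T - 1) i)) k) T' hT'card hdet
  -- consistency predicate
  set Cons : (Fin K → Fin (U - T - 1) → F) → Prop := fun w =>
    (∑ k ∈ U1, w k = c.1) ∧ ∀ k : {k // k ∈ insert u 𝒯}, w k.1 = (c.2 k).1 with hCons
  have hcons : ∀ v : Vt, Hc v = c → Cons v.1 := by
    intro v hv
    rw [hCons, ← hv]
    exact ⟨rfl, fun k => rfl⟩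
  have hmove : ∀ b1 b2, Cons b1 → Cons b2 → ∃ e : Vt → Vt, Function.Injective e ∧
      ∀ v, v.1 = b1 → Hc v = c →
        ((e v).1 = b2 ∧ Hc (e v) = c ∧ (Φ (e v) = a ↔ Φ v = a)) := by
    intro b1 b2 hb1 hb2
    rw [hCons] at hb1 hb2
    set δ : Fin K → Fin (U - T - 1) → F := fun k => b1 k - b2 k with hδ
    have hδU1 : ∑ i ∈ U1, δ i = 0 := by
      simp only [hδ]
      rw [Finset.sum_sub_distrib, hb1.1, hb2.1, sub_self]
    have hδD : ∀ k : {k // k ∈ insert u 𝒯}, δ k.1 = 0 := by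
      intro k
      simp only [hδ]
      rw [hb1.2 k, hb2.2 k, sub_self]
    have claim1 : ∀ k, k ∈ T' → ∀ d : Fin (U - T - 1) → F,
        share hm α d (fun l => -∑ r, d r * A r l) k = 0 := by
      intro k hk d
      exact share_eps_zero hm α A k (fun r => hA k hk r) d
    refine ⟨fun v => (fun k => v.1 k - δ k, fun k => v.2.1 k + δ k,
      fun i => v.2.2 i + fun l => -∑ r, δ i r * A r l), ?_, ?_⟩
    · apply Function.LeftInverse.injective
        (g := fun v : Vt => (fun k => v.1 k + δ k, fun k => v.2.1 k - δ k,
          fun i => v.2.2 i - fun l => -∑ r, δ i r * A r l))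
      intro v
      refine Prod.ext ?_ (Prod.ext ?_ ?_)
      · funext k; simp
      · funext k; simp
      · funext i; simp
    · intro v hvb hvc
      have hHceq : Hc (fun k => v.1 k - δ k, fun k => v.2.1 k + δ k,
          fun i => v.2.2 i + fun l => -∑ r, δ i r * A r l) = Hc v := by
        simp only [hHc]
        refine Prod.ext ?_ ?_
        · show ∑ k ∈ U1, (v.1 k - δ k) = ∑ k ∈ U1, v.1 k
          rw [Finset.sum_sub_distrib, hδU1, sub_zero]
        · funext k
          refine Prod.ext ?_ (Prod.ext ?_ ?_)
          · show v.1 k.1 - δ k.1 = v.1 k.1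
            rw [hδD k, sub_zero]
          · show v.2.1 k.1 + δ k.1 = v.2.1 k.1
            rw [hδD k, add_zero]
          · funext i
            show share hm α (v.2.1 i + δ i)
                (v.2.2 i + fun l => -∑ r, δ i r * A r l) k.1
              = share hm α (v.2.1 i) (v.2.2 i) k.1
            rw [share_add, claim1 k.1 (hDT' k.2) (δ i), add_zero]
      have hΦeq : Φ (fun k => v.1 k - δ k, fun k => v.2.1 k + δ k,
          fun i => v.2.2 i + fun l => -∑ r, δ i r * A r l) = Φ v := by
        simp only [hΦ]
        refine Prod.ext ?_ ?_
        · funext k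
          show (v.1 k.1 - δ k.1) + (v.2.1 k.1 + δ k.1) = v.1 k.1 + v.2.1 k.1
          abel
        · funext k
          show ∑ i ∈ U1, share hm α (v.2.1 i + δ i)
                (v.2.2 i + fun l => -∑ r, δ i r * A r l) k.1
            = ∑ i ∈ U1, share hm α (v.2.1 i) (v.2.2 i) k.1
          simp only [share_add]
          rw [Finset.sum_add_distrib, share_eps_sum hm α A k.1 U1 δ hδU1, add_zero]
      refine ⟨?_, ?_, ?_⟩
      · show (fun k => v.1 k - δ k) = b2
        funext k
        simp only [hδ, hvb]
        abel
      · rw [hHceq, hvc]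
      · rw [hΦeq]
  have hnat := counting_core (fun v : Vt => v.1) (fun v => Φ v = a) (fun v => Hc v = c)
    Cons hcons hmove b
  have main : ∀ (n1 n2 n3 n4 : ℕ) (ι : ℝ≥0∞), n1 * n2 = n3 * n4 →
      (n1 : ℝ≥0∞) * ι * ((n2 : ℝ≥0∞) * ι) = (n3 : ℝ≥0∞) * ι * ((n4 : ℝ≥0∞) * ι) := by
    intro n1 n2 n3 n4 ι h
    rw [mul_mul_mul_comm, mul_mul_mul_comm (n3 : ℝ≥0∞), ← Nat.cast_mul, ← Nat.cast_mul, h]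
  refine main _ _ _ _ _ ?_
  convert hnat using 2 <;>
  · congr 1
    ext v
    simp [and_assoc]
end

section
/- (Core step of the first-round converse.) Let F be a finite field with q elements and L, L_X natural numbers. Let Ω be a probability space carrying random variables W : Ω → F^L uniformly distributed, and (Z, V) (valued in arbitrary finite types) such that the pair (Z, V) is independent of W. Suppose X = f(W, Z) for some function f with values in F^{L_X}, and suppose there exists a function g such that g(X, V) = W almost surely. Then L_X ≥ L. -/
open MeasureTheory Finset
open scoped ENNReal

/-- **Core step of the first-round converse.**
Let `W : Ω → F^L` be uniform and let the pair `(Z, V)` (valued in finite types) be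
independent of `W`. If `X = f (W, Z) ∈ F^{L_X}` and some decoder `g` satisfies
`g (X, V) = W` almost surely, then `L_X ≥ L`. -/
theorem first_round_converse_core
    (F : Type) [Field F] [Fintype F] (q L LX : ℕ) (hq : Fintype.card F = q)
    (Ω : Type) [MeasurableSpace Ω] (P : Measure Ω) [IsProbabilityMeasure P]
    (Zt Vt : Type) [Fintype Zt] [Fintype Vt]
    (W : Ω → (Fin L → F)) (Z : Ω → Zt) (V : Ω → Vt)
    (hunifW : UniformRV P W)
    (hindep : IndepRV P W (fun ω => (Z ω, V ω)))
    (f : (Fin L → F) → Zt → (Fin LX → F))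
    (g : (Fin LX → F) → Vt → (Fin L → F))
    (hg : ∀ᵐ ω ∂P, g (f (W ω) (Z ω)) (V ω) = W ω) :
    L ≤ LX := by
  classical
  have hq2 : 2 ≤ q := by
    rw [← hq]; exact Fintype.one_lt_card
  -- the bad event has measure zero
  have hbad : P {ω | ¬ g (f (W ω) (Z ω)) (V ω) = W ω} = 0 := by
    simpa [ae_iff] using hg
  -- there exists (z,v) with positive probability
  obtain ⟨p, hp⟩ : ∃ p : Zt × Vt, P ((fun ω => (Z ω, V ω)) ⁻¹' {p}) ≠ 0 := by
    by_contra h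
    push_neg at h
    have hcover : (Set.univ : Set Ω) ⊆ ⋃ p : Zt × Vt, (fun ω => (Z ω, V ω)) ⁻¹' {p} := by
      intro ω _
      exact Set.mem_iUnion.2 ⟨(Z ω, V ω), rfl⟩
    have h1 : P (Set.univ : Set Ω) ≤ ∑' p : Zt × Vt, P ((fun ω => (Z ω, V ω)) ⁻¹' {p}) :=
      le_trans (measure_mono hcover) (measure_iUnion_le _)
    rw [measure_univ] at h1
    simp [h] at h1
  obtain ⟨z, v⟩ := p
  set A : Finset (Fin L → F) := Finset.univ.filter (fun w => g (f w z) v = w) with hA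
  -- bound on card A via injectivity
  have hinj : Set.InjOn (fun w => f w z) (A : Set (Fin L → F)) := by
    intro w1 h1 w2 h2 he
    have e1 : g (f w1 z) v = w1 := (Finset.mem_filter.1 (Finset.mem_coe.1 h1)).2
    have e2 : g (f w2 z) v = w2 := (Finset.mem_filter.1 (Finset.mem_coe.1 h2)).2
    simp only at he
    rw [← e1, ← e2, he]
  have hcardA_le : A.card ≤ q ^ LX := by
    have := Finset.card_le_card_of_injOn (fun w => f w z) (fun w _ => Finset.mem_univ _) hinj
    calc A.card ≤ (Finset.univ : Finset (Fin LX → F)).card := this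
      _ = q ^ LX := by
        rw [Finset.card_univ, Fintype.card_fun]
        simp [hq]
  -- For w outside A, the intersection has measure zero
  have hzero : ∀ w : Fin L → F, w ∉ A →
      P (W ⁻¹' {w} ∩ (fun ω => (Z ω, V ω)) ⁻¹' {(z, v)}) = 0 := by
    intro w hw
    refine measure_mono_null ?_ hbad
    intro ω ⟨h1, h2⟩
    simp only [Set.mem_preimage, Set.mem_singleton_iff] at h1 h2
    have hz : Z ω = z := by rw [Prod.ext_iff] at h2; exact h2.1
    have hv : V ω = v := by rw [Prod.ext_iff] at h2; exact h2.2
    simp only [Set.mem_setOf_eq, h1, hz, hv]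
    intro hc
    exact hw (Finset.mem_filter.2 ⟨Finset.mem_univ _, hc⟩)
  -- the key bound
  set B : Set Ω := (fun ω => (Z ω, V ω)) ⁻¹' {(z, v)} with hB
  have hkey : P B ≤ (A.card : ℝ≥0∞) * ((q : ℝ≥0∞) ^ L)⁻¹ * P B := by
    have hcover : B ⊆ ⋃ w : Fin L → F, (W ⁻¹' {w} ∩ B) := by
      intro ω hω
      exact Set.mem_iUnion.2 ⟨W ω, rfl, hω⟩
    have h1 : P B ≤ ∑' w : Fin L → F, P (W ⁻¹' {w} ∩ B) :=
      le_trans (measure_mono hcover) (measure_iUnion_le _)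
    rw [tsum_fintype] at h1
    have h2 : ∑ w : Fin L → F, P (W ⁻¹' {w} ∩ B)
        = ∑ w ∈ A, ((q : ℝ≥0∞) ^ L)⁻¹ * P B := by
      rw [← Finset.sum_filter_add_sum_filter_not Finset.univ (fun w => g (f w z) v = w)]
      have hz2 : ∑ w ∈ Finset.univ.filter (fun w => ¬ g (f w z) v = w),
          P (W ⁻¹' {w} ∩ B) = 0 := by
        refine Finset.sum_eq_zero (fun w hw => ?_)
        apply hzero
        simp only [hA, Finset.mem_filter] at *
        tauto
      rw [hz2, add_zero]
      refine Finset.sum_congr rfl (fun w _ => ?_)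
      rw [hB, hindep w (z, v), hunifW w]
      congr 1
      rw [Fintype.card_fun]
      simp [hq]
    rw [h2, Finset.sum_const, nsmul_eq_mul, ← mul_assoc] at h1
    exact h1
  -- cancel P B
  have hPBlt : P B < ⊤ := lt_of_le_of_lt prob_le_one (by norm_num)
  have hone : (1 : ℝ≥0∞) ≤ (A.card : ℝ≥0∞) * ((q : ℝ≥0∞) ^ L)⁻¹ := by
    by_contra hc
    push_neg at hc
    have := lt_of_le_of_lt hkey (by
      calc (A.card : ℝ≥0∞) * ((q : ℝ≥0∞) ^ L)⁻¹ * P B < 1 * P B := by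
            exact ENNReal.mul_lt_mul_left hp hPBlt.ne hc
        _ = P B := one_mul _)
    exact lt_irrefl _ this
  -- deduce q^L ≤ A.card
  have hqL : (q : ℝ≥0∞) ^ L ≤ (A.card : ℝ≥0∞) := by
    have hq0 : (q : ℝ≥0∞) ^ L ≠ 0 := by positivity
    have hqt : (q : ℝ≥0∞) ^ L ≠ ⊤ := by
      exact ENNReal.pow_ne_top (ENNReal.natCast_ne_top q)
    calc (q : ℝ≥0∞) ^ L = 1 * (q : ℝ≥0∞) ^ L := (one_mul _).symm
      _ ≤ (A.card : ℝ≥0∞) * ((q : ℝ≥0∞) ^ L)⁻¹ * (q : ℝ≥0∞) ^ L :=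
          mul_le_mul_left hone _
      _ = (A.card : ℝ≥0∞) := by
          rw [mul_assoc, ENNReal.inv_mul_cancel hq0 hqt, mul_one]
  have hnat : q ^ L ≤ A.card := by
    have := hqL
    rw [← Nat.cast_pow] at this
    exact_mod_cast this
  have : q ^ L ≤ q ^ LX := le_trans hnat hcardA_le
  exact (Nat.pow_le_pow_iff_right (by omega)).1 this
end

section
/- (Core step of the second-round converse.) Let F be a finite field with q elements and L, M natural numbers. Let Ω be a probability space carrying random variables S : Ω → F^L uniformly distributed, A (valued in an arbitrary finite type), and B : Ω → F^M. Suppose S is independent of A, and suppose there exists a function h such that S = h(A, B) almost surely. Then L ≤ M. -/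
open MeasureTheory Finset
open scoped ENNReal

/-- **Core step of the second-round converse.**
Let `S : Ω → F^L` be uniform, `A` a random variable valued in an arbitrary finite type
with `S` independent of `A`, and `B : Ω → F^M`. If some function `h` satisfies
`S = h (A, B)` almost surely, then `L ≤ M`. -/
theorem second_round_converse_core
    (F : Type) [Field F] [Fintype F] (q L M : ℕ) (hq : Fintype.card F = q)
    (Ω : Type) [MeasurableSpace Ω] (P : Measure Ω) [IsProbabilityMeasure P]
    (At : Type) [Fintype At]
    (S : Ω → (Fin L → F)) (A : Ω → At) (B : Ω → (Fin M → F))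
    (hunifS : UniformRV P S)
    (hSA : IndepRV P S A)
    (h : At → (Fin M → F) → (Fin L → F))
    (hh : ∀ᵐ ω ∂P, S ω = h (A ω) (B ω)) :
    L ≤ M := by
  classical
  -- find a with P(A = a) ≠ 0
  have hsum : (1 : ℝ≥0∞) ≤ ∑ a : At, P (A ⁻¹' {a}) := by
    have hunion : (Set.univ : Set Ω) = ⋃ a ∈ (Finset.univ : Finset At), A ⁻¹' {a} := by
      ext ω; simp
    calc (1 : ℝ≥0∞) = P Set.univ := (measure_univ).symm
      _ = P (⋃ a ∈ (Finset.univ : Finset At), A ⁻¹' {a}) := by rw [← hunion]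
      _ ≤ ∑ a : At, P (A ⁻¹' {a}) := measure_biUnion_finset_le _ _
  have hAt : Nonempty At := by
    by_contra hne
    simp only [not_nonempty_iff] at hne
    simp [Finset.univ_eq_empty] at hsum
  obtain ⟨a, ha⟩ : ∃ a : At, P (A ⁻¹' {a}) ≠ 0 := by
    by_contra hc
    push_neg at hc
    simp [hc] at hsum
  -- h a is surjective
  have hsurj : Function.Surjective (h a) := by
    intro s
    have hpos : P (S ⁻¹' {s} ∩ A ⁻¹' {a}) ≠ 0 := by
      rw [hSA s a, hunifS s]
      exact mul_ne_zero (ENNReal.inv_ne_zero.2 (by simp)) ha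
    have hpos2 : P ((S ⁻¹' {s} ∩ A ⁻¹' {a}) ∩ {ω | S ω = h (A ω) (B ω)}) ≠ 0 := by
      intro h0
      apply hpos
      have hnull : P ((S ⁻¹' {s} ∩ A ⁻¹' {a}) \ {ω | S ω = h (A ω) (B ω)}) = 0 :=
        measure_mono_null (fun ω hω => hω.2) hh
      have hle := measure_le_inter_add_diff P (S ⁻¹' {s} ∩ A ⁻¹' {a})
        {ω | S ω = h (A ω) (B ω)}
      rw [h0, hnull, add_zero] at hle
      exact le_antisymm hle zero_le
    obtain ⟨ω, ⟨⟨hS, hA⟩, hE⟩⟩ := nonempty_of_measure_ne_zero hpos2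
    refine ⟨B ω, ?_⟩
    simp only [Set.mem_preimage, Set.mem_singleton_iff] at hS hA
    rw [← hA]
    exact (hE ▸ hS : _) ▸ rfl
  have hcard := Fintype.card_le_of_surjective _ hsurj
  simp only [Fintype.card_fun, Fintype.card_fin, hq] at hcard
  have hq2 : 2 ≤ q := hq ▸ Fintype.one_lt_card
  exact (pow_le_pow_iff_right₀ hq2).1 hcard
end
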